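/- Define a map Φ from perfect matchings of {1,...,2n} to cosets S_{2n}/α(S_n): Φ(M) is the relevant coset determined by M (the coset of any σ with σ(i) > σ(i+n) for all i and {{σ(i),σ(i+n)}} = M). Define a partial action of adjacent transpositions s on relevant cosets by s * x = s·x if s·x is relevant, and s * x = x otherwise. Then for every adjacent transposition s and every matching M, Φ(s·M) = s * Φ(M). -/
import Mathlib


open Equiv

/-- A perfect matching of `Fin (2*n)`. -/
def IsPerfectMatching (n : ℕ) (M : Finset (Finset (Fin (2 * n)))) : Prop :=
  (∀ p ∈ M, p.card = 2) ∧ ∀ x : Fin (2 * n), ∃! p, p ∈ M ∧ x ∈ p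

/-- The identification of `Fin n ⊕ Fin n` with `Fin (2*n)`, sending `inl i` to `i`
(the block `{1,...,n}`) and `inr i` to `n + i` (the block `{n+1,...,2n}`). -/
def blockEquiv (n : ℕ) : Fin n ⊕ Fin n ≃ Fin (2 * n) :=
  finSumFinEquiv.trans (finCongr (two_mul n).symm)

/-- Conjugation of permutation groups by an equivalence, as a `MulEquiv`. -/
def permCongrMulEquiv {α β : Type*} (e : α ≃ β) : Perm α ≃* Perm β :=
  { Equiv.permCongr e with
    map_mul' := by
      intro f g
      ext x
      simp [Equiv.permCongr, Equiv.equivCongr, Equiv.Perm.mul_apply] }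

/-- The block-diagonal embedding `α : S_n → S_{2n}`, acting by `τ` on each of the two
blocks: `α(τ)(x) = τ(x)` for `x ≤ n` and `α(τ)(x) = τ(x-n)+n` otherwise. -/
def alphaHom (n : ℕ) : Perm (Fin n) →* Perm (Fin (2 * n)) :=
  (permCongrMulEquiv (blockEquiv n)).toMonoidHom.comp
    ((Equiv.Perm.sumCongrHom (Fin n) (Fin n)).comp
      ((MonoidHom.id (Perm (Fin n))).prod (MonoidHom.id (Perm (Fin n)))))

/-- The image subgroup `α(S_n) ≤ S_{2n}`; the quotient `S_{2n} ⧸ K n` identifies `σ`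
with `σ ∘ α(τ)`, i.e. it is the set of cosets under right multiplication by `α(S_n)`. -/
def K (n : ℕ) : Subgroup (Perm (Fin (2 * n))) := (alphaHom n).range

/-- `σ` satisfies `σ(i) > σ(i+n)` for all `1 ≤ i ≤ n`. -/
def IsRelevantRep (n : ℕ) (σ : Perm (Fin (2 * n))) : Prop :=
  ∀ i : Fin n, σ (blockEquiv n (Sum.inr i)) < σ (blockEquiv n (Sum.inl i))

/-- A coset is relevant if it has a representative `σ` with `σ(i) > σ(i+n)` for all `i`. -/
def RelevantCoset (n : ℕ) (x : Perm (Fin (2 * n)) ⧸ K n) : Prop :=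
  ∃ σ : Perm (Fin (2 * n)), IsRelevantRep n σ ∧ QuotientGroup.mk σ = x

/-- The matching `{{σ(i), σ(i+n)} : 1 ≤ i ≤ n}` attached to `σ`. -/
def matchOf (n : ℕ) (σ : Perm (Fin (2 * n))) : Finset (Finset (Fin (2 * n))) :=
  Finset.univ.image fun i : Fin n =>
    ({σ (blockEquiv n (Sum.inl i)), σ (blockEquiv n (Sum.inr i))} : Finset (Fin (2 * n)))


/-- The elementwise action of `w ∈ S_{2n}` on a set of pairs. -/
def actOn (n : ℕ) (w : Perm (Fin (2 * n))) (M : Finset (Finset (Fin (2 * n)))) :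
    Finset (Finset (Fin (2 * n))) :=
  M.image (Finset.image w)

/-- The adjacent transposition `(j, j+1)` of `S_{2n}` (0-indexed). -/
def tr (n j : ℕ) (h : j + 1 < 2 * n) : Perm (Fin (2 * n)) :=
  Equiv.swap ⟨j, by omega⟩ ⟨j + 1, h⟩


section Aux

variable {n : ℕ}

lemma alpha_apply (n : ℕ) (τ : Perm (Fin n)) (z : Fin n ⊕ Fin n) :
    alphaHom n τ (blockEquiv n z) = blockEquiv n (Equiv.sumCongr τ τ z) := by
  simp [alphaHom, permCongrMulEquiv, Equiv.Perm.sumCongrHom]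

lemma matchOf_mul_alpha (n : ℕ) (σ : Perm (Fin (2 * n))) (τ : Perm (Fin n)) :
    matchOf n (σ * alphaHom n τ) = matchOf n σ := by
  have h1 : matchOf n (σ * alphaHom n τ) = Finset.univ.image
      ((fun i : Fin n => ({σ (blockEquiv n (Sum.inl i)), σ (blockEquiv n (Sum.inr i))} :
        Finset (Fin (2 * n)))) ∘ τ) := by
    unfold matchOf
    apply Finset.image_congr
    intro i _
    simp [Perm.mul_apply, alpha_apply, Function.comp]
  rw [h1, ← Finset.image_image, Finset.image_univ_of_surjective τ.surjective]
  rfl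

lemma matchOf_eq_of_mk_eq {σ τ : Perm (Fin (2 * n))}
    (h : (QuotientGroup.mk σ : Perm (Fin (2 * n)) ⧸ K n) = QuotientGroup.mk τ) :
    matchOf n σ = matchOf n τ := by
  rw [QuotientGroup.eq] at h
  obtain ⟨u, hu⟩ := h
  have hτ : τ = σ * alphaHom n u := by rw [hu, mul_inv_cancel_left]
  rw [hτ, matchOf_mul_alpha]

lemma actOn_matchOf (n : ℕ) (w σ : Perm (Fin (2 * n))) :
    matchOf n (w * σ) = actOn n w (matchOf n σ) := by
  unfold matchOf actOn
  rw [Finset.image_image]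
  apply Finset.image_congr
  intro i _
  simp [Perm.mul_apply, Function.comp]

lemma card_of_pm {M : Finset (Finset (Fin (2 * n)))} (hM : IsPerfectMatching n M) :
    M.card = n := by
  have hdisj : ∀ p ∈ M, ∀ q ∈ M, p ≠ q → Disjoint p q := by
    intro p hp q hq hpq
    rw [Finset.disjoint_left]
    intro x hxp hxq
    obtain ⟨r, -, hr⟩ := hM.2 x
    exact hpq ((hr p ⟨hp, hxp⟩).trans (hr q ⟨hq, hxq⟩).symm)
  have hcover : M.biUnion id = Finset.univ := by
    apply Finset.eq_univ_iff_forall.mpr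
    intro x
    obtain ⟨p, ⟨hp, hxp⟩, -⟩ := hM.2 x
    exact Finset.mem_biUnion.mpr ⟨p, hp, hxp⟩
  have h1 : (M.biUnion id).card = ∑ p ∈ M, (id p : Finset (Fin (2 * n))).card :=
    Finset.card_biUnion hdisj
  rw [hcover] at h1
  have h2 : ∑ p ∈ M, (id p : Finset (Fin (2 * n))).card = ∑ _p ∈ M, 2 :=
    Finset.sum_congr rfl hM.1
  rw [h2, Finset.sum_const, smul_eq_mul] at h1
  simp only [Finset.card_univ, Fintype.card_fin] at h1
  omega

lemma pair_lemma {α : Type*} [LinearOrder α] [DecidableEq α] {p : Finset α} (h2 : p.card = 2)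
    (hne : p.Nonempty) :
    p.min' hne < p.max' hne ∧ ({p.max' hne, p.min' hne} : Finset α) = p := by
  have hlt : p.min' hne < p.max' hne := Finset.min'_lt_max'_of_card p (by omega)
  refine ⟨hlt, ?_⟩
  apply Finset.eq_of_subset_of_card_le
  · intro x hx
    simp only [Finset.mem_insert, Finset.mem_singleton] at hx
    rcases hx with rfl | rfl
    exacts [p.max'_mem hne, p.min'_mem hne]
  · rw [h2, Finset.card_pair hlt.ne']

lemma exists_relevant_rep (n : ℕ) (M : Finset (Finset (Fin (2 * n))))
    (hM : IsPerfectMatching n M) :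
    ∃ σ : Perm (Fin (2 * n)), IsRelevantRep n σ ∧ matchOf n σ = M := by
  have hcard : M.card = n := card_of_pm hM
  let e : Fin n ≃ {p // p ∈ M} := (M.equivFin.trans (finCongr hcard)).symm
  have hmem : ∀ i : Fin n, (e i : Finset (Fin (2 * n))) ∈ M := fun i => (e i).2
  have h2 : ∀ i : Fin n, (e i : Finset (Fin (2 * n))).card = 2 := fun i => hM.1 _ (hmem i)
  have hne : ∀ i : Fin n, (e i : Finset (Fin (2 * n))).Nonempty := fun i =>
    Finset.card_pos.mp (by rw [h2 i]; norm_num)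
  let f : Fin n ⊕ Fin n → Fin (2 * n) :=
    Sum.elim (fun i => (e i : Finset (Fin (2 * n))).max' (hne i))
             (fun i => (e i : Finset (Fin (2 * n))).min' (hne i))
  have hfmem : ∀ z, f z ∈ (e (Sum.elim id id z) : Finset (Fin (2 * n))) := by
    rintro (i | i)
    · exact Finset.max'_mem _ _
    · exact Finset.min'_mem _ _
  have hlt : ∀ i : Fin n,
      (e i : Finset (Fin (2 * n))).min' (hne i) < (e i : Finset (Fin (2 * n))).max' (hne i) :=
    fun i => (pair_lemma (h2 i) (hne i)).1
  have hinj : Function.Injective f := by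
    intro z z' h
    have hidx : Sum.elim id id z = Sum.elim id id z' := by
      apply e.injective
      apply Subtype.ext
      obtain ⟨r, -, hr⟩ := hM.2 (f z)
      have e1 := hr _ ⟨hmem _, hfmem z⟩
      have e2 := hr _ ⟨hmem _, h ▸ hfmem z'⟩
      exact e1.trans e2.symm
    rcases z with i | i <;> rcases z' with i' | i'
    · simp only [Sum.elim_inl, id] at hidx; rw [hidx]
    · simp only [Sum.elim_inl, Sum.elim_inr, id] at hidx
      subst hidx
      exact absurd h (hlt i).ne'
    · simp only [Sum.elim_inl, Sum.elim_inr, id] at hidx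
      subst hidx
      exact absurd h (hlt i).ne
    · simp only [Sum.elim_inr, id] at hidx; rw [hidx]
  have hbij : Function.Bijective f := by
    rw [Fintype.bijective_iff_injective_and_card]
    refine ⟨hinj, ?_⟩
    simp [Fintype.card_sum, two_mul]
  refine ⟨(blockEquiv n).symm.trans (Equiv.ofBijective f hbij), ?_, ?_⟩
  · intro i
    simp only [Equiv.trans_apply, Equiv.symm_apply_apply, Equiv.ofBijective_apply]
    exact hlt i
  · unfold matchOf
    have hrw : (Finset.univ.image fun i : Fin n =>
        ({((blockEquiv n).symm.trans (Equiv.ofBijective f hbij)) (blockEquiv n (Sum.inl i)),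
          ((blockEquiv n).symm.trans (Equiv.ofBijective f hbij)) (blockEquiv n (Sum.inr i))} :
          Finset (Fin (2 * n)))) =
        Finset.univ.image (fun i : Fin n => (e i : Finset (Fin (2 * n)))) := by
      apply Finset.image_congr
      intro i _
      simp only [Equiv.trans_apply, Equiv.symm_apply_apply, Equiv.ofBijective_apply]
      exact (pair_lemma (h2 i) (hne i)).2
    rw [hrw]
    ext q
    simp only [Finset.mem_image, Finset.mem_univ, true_and]
    constructor
    · rintro ⟨i, rfl⟩; exact hmem i
    · intro hq; exact ⟨e.symm ⟨q, hq⟩, by simp⟩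

lemma tr_relevant (n j : ℕ) (hj : j + 1 < 2 * n) {σ : Perm (Fin (2 * n))}
    (hσ : IsRelevantRep n σ)
    (hpair : ({⟨j, by omega⟩, ⟨j + 1, hj⟩} : Finset (Fin (2 * n))) ∉ matchOf n σ) :
    IsRelevantRep n (tr n j hj * σ) := by
  intro i
  have hrel := hσ i
  simp only [Perm.mul_apply]
  set a := σ (blockEquiv n (Sum.inl i))
  set b := σ (blockEquiv n (Sum.inr i))
  have hab : ({a, b} : Finset (Fin (2 * n))) ∈ matchOf n σ := by
    simp only [matchOf, Finset.mem_image]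
    exact ⟨i, Finset.mem_univ i, rfl⟩
  have hne2 : ¬(a = ⟨j + 1, hj⟩ ∧ b = (⟨j, by omega⟩ : Fin (2 * n))) := by
    rintro ⟨h1, h2⟩
    rw [h1, h2] at hab
    exact hpair (by rwa [Finset.pair_comm] at hab)
  have ha2 : a.val < 2 * n := a.isLt
  have hb2 : b.val < 2 * n := b.isLt
  rw [Fin.lt_def] at hrel
  have hne2' : ¬(a.val = j + 1 ∧ b.val = j) := fun h => hne2 ⟨Fin.ext h.1, Fin.ext h.2⟩
  clear hne2 hab hpair hσ
  simp only [tr, Equiv.swap_apply_def]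
  split_ifs <;> simp only [Fin.lt_def, Fin.ext_iff, Fin.val_mk] at * <;> omega

lemma actOn_eq_self (n j : ℕ) (hj : j + 1 < 2 * n) {M : Finset (Finset (Fin (2 * n)))}
    (hM : IsPerfectMatching n M)
    (hpair : ({⟨j, by omega⟩, ⟨j + 1, hj⟩} : Finset (Fin (2 * n))) ∈ M) :
    actOn n (tr n j hj) M = M := by
  unfold actOn
  have key : ∀ p ∈ M, Finset.image (tr n j hj) p = p := by
    intro p hp
    by_cases hpq : p = ({⟨j, by omega⟩, ⟨j + 1, hj⟩} : Finset (Fin (2 * n)))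
    · subst hpq
      rw [Finset.image_insert, Finset.image_singleton]
      simp only [tr, Equiv.swap_apply_left, Equiv.swap_apply_right]
      exact Finset.pair_comm _ _
    · have hJ : (⟨j, by omega⟩ : Fin (2 * n)) ∉ p := by
        intro hJp
        obtain ⟨r, -, hr⟩ := hM.2 ⟨j, by omega⟩
        exact hpq ((hr p ⟨hp, hJp⟩).trans (hr _ ⟨hpair, by simp⟩).symm)
      have hJ' : (⟨j + 1, hj⟩ : Fin (2 * n)) ∉ p := by
        intro hJp
        obtain ⟨r, -, hr⟩ := hM.2 ⟨j + 1, hj⟩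
        exact hpq ((hr p ⟨hp, hJp⟩).trans (hr _ ⟨hpair, by simp⟩).symm)
      have : Finset.image (tr n j hj) p = Finset.image id p := by
        apply Finset.image_congr
        intro x hx
        exact Equiv.swap_apply_of_ne_of_ne (fun h => hJ (h ▸ hx)) (fun h => hJ' (h ▸ hx))
      rw [this, Finset.image_id]
  calc M.image (Finset.image (tr n j hj)) = M.image id :=
        Finset.image_congr fun p hp => key p hp
    _ = M := Finset.image_id

end Aux

/-- Let `Φ` send a perfect matching `M` to the relevant coset determined by `M` (the coset
of any `σ` with `σ(i) > σ(i+n)` for all `i` and `{{σ(i),σ(i+n)}} = M`). For an adjacent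
transposition `s` define a partial action on relevant cosets by `s * x = s·x` if `s·x` is
relevant and `s * x = x` otherwise. Then `Φ(s·M) = s * Φ(M)` for every adjacent
transposition `s` and matching `M`. -/
theorem Phi_equivariant (n : ℕ)
    (Φ : {M : Finset (Finset (Fin (2 * n))) // IsPerfectMatching n M} →
      Perm (Fin (2 * n)) ⧸ K n)
    (hΦ : ∀ (σ : Perm (Fin (2 * n))) (hσ : IsRelevantRep n σ)
      (hpm : IsPerfectMatching n (matchOf n σ)),
      Φ ⟨matchOf n σ, hpm⟩ = QuotientGroup.mk σ) :
    ∀ (j : ℕ) (hj : j + 1 < 2 * n) (M : Finset (Finset (Fin (2 * n))))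
      (hM : IsPerfectMatching n M)
      (hM' : IsPerfectMatching n (actOn n (tr n j hj) M)),
      (RelevantCoset n (tr n j hj • Φ ⟨M, hM⟩) →
        Φ ⟨actOn n (tr n j hj) M, hM'⟩ = tr n j hj • Φ ⟨M, hM⟩) ∧
      (¬ RelevantCoset n (tr n j hj • Φ ⟨M, hM⟩) →
        Φ ⟨actOn n (tr n j hj) M, hM'⟩ = Φ ⟨M, hM⟩) := by
  intro j hj M hM hM'
  obtain ⟨σ, hσrel, hσM⟩ := exists_relevant_rep n M hM
  subst hσM
  have hsmul : tr n j hj • (QuotientGroup.mk σ : Perm (Fin (2 * n)) ⧸ K n) =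
      QuotientGroup.mk (tr n j hj * σ) := rfl
  have hΦM := hΦ σ hσrel hM
  have hact : matchOf n (tr n j hj * σ) = actOn n (tr n j hj) (matchOf n σ) :=
    actOn_matchOf n _ σ
  constructor
  · intro hrel
    rw [hΦM, hsmul] at hrel
    obtain ⟨σ', hσ'rel, hσ'mk⟩ := hrel
    have hmm : matchOf n σ' = actOn n (tr n j hj) (matchOf n σ) := by
      rw [← hact]; exact matchOf_eq_of_mk_eq hσ'mk
    have hpm' : IsPerfectMatching n (matchOf n σ') := hmm ▸ hM'
    have key := hΦ σ' hσ'rel hpm'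
    have hsub : (⟨actOn n (tr n j hj) (matchOf n σ), hM'⟩ :
        {M : Finset (Finset (Fin (2 * n))) // IsPerfectMatching n M}) = ⟨matchOf n σ', hpm'⟩ :=
      Subtype.ext hmm.symm
    rw [hsub, key, hΦM, hsmul]
    exact hσ'mk
  · intro hnrel
    rw [hΦM, hsmul] at hnrel
    by_cases hpm : ({⟨j, by omega⟩, ⟨j + 1, hj⟩} : Finset (Fin (2 * n))) ∈ matchOf n σ
    · have heq : actOn n (tr n j hj) (matchOf n σ) = matchOf n σ := actOn_eq_self n j hj hM hpm
      exact congrArg Φ (Subtype.ext heq)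
    · exact absurd ⟨tr n j hj * σ, tr_relevant n j hj hσrel hpm, rfl⟩ hnrel
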